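/- If I and J are two integrable anticommuting complex structures on a smooth manifold M (so that K = IJ is an almost-complex structure anticommuting with both), then every almost-complex structure aI + bJ + cK with a² + b² + c² = 1 is integrable. -/
import Mathlib


/-!
STATEMENT 5.  If `I` and `J` are two integrable anticommuting complex structures on a
smooth manifold `M` (so that `K = IJ` is an almost complex structure anticommuting with
both), then every almost complex structure `aI + bJ + cK` with `a² + b² + c² = 1` is
integrable.

The smooth manifold is modelled Lie–Rinehart style: a commutative ℝ-algebra `C` of
smooth functions, a `C`-module `V` of vector fields carrying a Lie bracket acting on
`C` by derivations.  An almost complex structure is a `C`-linear endomorphism `L` of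
`V` with `L² = -Id`, and it is integrable iff its Nijenhuis tensor
`N_L(X,Y) = [LX,LY] - L[LX,Y] - L[X,LY] + L²[X,Y]` vanishes.
-/

open Module

/-- Lie–Rinehart style model of the vector fields of a smooth manifold carrying two
anticommuting integrable complex structures `I` and `J`. -/
structure AnticommutingComplexPair where
  /-- the algebra of smooth functions -/
  C : Type
  [instC : CommRing C]
  [instAlg : Algebra ℝ C]
  /-- the module of vector fields -/
  V : Type
  [instV : AddCommGroup V]
  [instModC : Module C V]
  [instModR : Module ℝ V]
  [instTower : IsScalarTower ℝ C V]
  /-- the Lie bracket of vector fields -/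
  bracket : V → V → V
  bracket_add_left : ∀ X Y Z, bracket (X + Y) Z = bracket X Z + bracket Y Z
  bracket_add_right : ∀ X Y Z, bracket X (Y + Z) = bracket X Y + bracket X Z
  bracket_smul_left : ∀ (r : ℝ) (X Y), bracket (r • X) Y = r • bracket X Y
  bracket_antisymm : ∀ X Y, bracket X Y = - bracket Y X
  jacobi : ∀ X Y Z,
    bracket X (bracket Y Z) + bracket Y (bracket Z X) + bracket Z (bracket X Y) = 0
  /-- the action of vector fields on functions by derivations -/
  act : V → C → C
  act_leibniz : ∀ X (f : C) Y, bracket X (f • Y) = f • bracket X Y + (act X f) • Y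
  /-- the two anticommuting almost complex structures -/
  I : V →ₗ[C] V
  J : V →ₗ[C] V
  I_sq : ∀ v, I (I v) = -v
  J_sq : ∀ v, J (J v) = -v
  anticommute : ∀ v, I (J v) + J (I v) = 0

namespace AnticommutingComplexPair

attribute [instance] instC instAlg instV instModC instModR instTower

variable (M : AnticommutingComplexPair)

/-- The Nijenhuis tensor of an endomorphism `L` of the vector fields:
`N_L(X,Y) = [LX,LY] - L[LX,Y] - L[X,LY] + L(L[X,Y])`. -/
def nijenhuis (L : M.V → M.V) (X Y : M.V) : M.V :=
  M.bracket (L X) (L Y) - L (M.bracket (L X) Y) - L (M.bracket X (L Y)) +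
    L (L (M.bracket X Y))

/-- An almost complex structure is integrable iff its Nijenhuis tensor vanishes. -/
def Integrable (L : M.V → M.V) : Prop := ∀ X Y, M.nijenhuis L X Y = 0

end AnticommutingComplexPair

set_option maxHeartbeats 1000000 in
/-- if `I` and `J` are integrable anticommuting complex structures,
then for all `(a,b,c)` on the unit sphere the almost complex structure
`aI + bJ + cK`, with `K = IJ`, is integrable. -/
theorem sphere_of_complex_structures_integrable
    (M : AnticommutingComplexPair)
    (hI : M.Integrable M.I) (hJ : M.Integrable M.J)
    (a b c : ℝ) (h : a ^ 2 + b ^ 2 + c ^ 2 = 1) :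
    M.Integrable (fun v => a • M.I v + b • M.J v + c • M.I (M.J v)) := by
  intro X Y
  have hJI : ∀ v, M.J (M.I v) = -(M.I (M.J v)) := fun v =>
    eq_neg_of_add_eq_zero_left (by have := M.anticommute v; linear_combination (norm := abel) this)
  have hsr : ∀ (r : ℝ) (X Y : M.V), M.bracket X (r • Y) = r • M.bracket X Y := by
    intro r X Y
    rw [M.bracket_antisymm, M.bracket_smul_left, M.bracket_antisymm X Y, smul_neg]
  have hnl : ∀ (X Y : M.V), M.bracket (-X) Y = -M.bracket X Y := by
    intro X Y
    rw [show (-X : M.V) = (-1 : ℝ) • X by simp, M.bracket_smul_left, neg_one_smul]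
  have hnr : ∀ (X Y : M.V), M.bracket X (-Y) = -M.bracket X Y := by
    intro X Y
    rw [show (-Y : M.V) = (-1 : ℝ) • Y by simp, hsr, neg_one_smul]
  have key : M.nijenhuis (fun v => a • M.I v + b • M.J v + c • M.I (M.J v)) X Y =
      (((a * a) * (1/1 : ℝ)) • (M.nijenhuis M.I (X) (Y))) +
      (((a * b) * (-1/2 : ℝ)) • (M.nijenhuis M.I (X) (M.I (M.J (Y))))) +
      (((a * b) * (-1/2 : ℝ)) • (M.nijenhuis M.I (M.J (X)) (M.I (Y)))) +
      (((a * b) * (1/2 : ℝ)) • (M.J (M.nijenhuis M.I (X) (M.I (Y))))) +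
      (((a * b) * (-1/2 : ℝ)) • (M.J (M.nijenhuis M.I (M.J (X)) (M.I (M.J (Y)))))) +
      (((a * b) * (1/2 : ℝ)) • (M.nijenhuis M.J (X) (M.I (M.J (Y))))) +
      (((a * b) * (-1/2 : ℝ)) • (M.nijenhuis M.J (M.I (X)) (M.J (Y)))) +
      (((a * b) * (1/2 : ℝ)) • (M.I (M.nijenhuis M.J (X) (M.J (Y))))) +
      (((a * b) * (1/2 : ℝ)) • (M.I (M.nijenhuis M.J (M.I (X)) (M.I (M.J (Y)))))) +
      (((a * c) * (1/2 : ℝ)) • (M.nijenhuis M.I (X) (M.J (Y)))) +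
      (((a * c) * (1/2 : ℝ)) • (M.nijenhuis M.I (M.J (X)) (Y))) +
      (((a * c) * (-1/2 : ℝ)) • (M.J (M.nijenhuis M.I (X) (Y)))) +
      (((a * c) * (1/2 : ℝ)) • (M.J (M.nijenhuis M.I (M.J (X)) (M.J (Y))))) +
      (((a * c) * (-1/2 : ℝ)) • (M.nijenhuis M.J (X) (M.J (Y)))) +
      (((a * c) * (-1/2 : ℝ)) • (M.nijenhuis M.J (M.I (X)) (M.I (M.J (Y))))) +
      (((a * c) * (1/2 : ℝ)) • (M.I (M.nijenhuis M.J (X) (M.I (M.J (Y)))))) +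
      (((a * c) * (-1/2 : ℝ)) • (M.I (M.nijenhuis M.J (M.I (X)) (M.J (Y))))) +
      (((b * b) * (1/1 : ℝ)) • (M.nijenhuis M.J (X) (Y))) +
      (((b * c) * (1/2 : ℝ)) • (M.nijenhuis M.I (X) (M.I (Y)))) +
      (((b * c) * (-1/2 : ℝ)) • (M.nijenhuis M.I (M.J (X)) (M.I (M.J (Y))))) +
      (((b * c) * (1/2 : ℝ)) • (M.J (M.nijenhuis M.I (X) (M.I (M.J (Y)))))) +
      (((b * c) * (1/2 : ℝ)) • (M.J (M.nijenhuis M.I (M.J (X)) (M.I (Y))))) +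
      (((b * c) * (-1/2 : ℝ)) • (M.nijenhuis M.J (X) (M.I (Y)))) +
      (((b * c) * (-1/2 : ℝ)) • (M.nijenhuis M.J (M.I (X)) (Y))) +
      (((b * c) * (1/2 : ℝ)) • (M.I (M.nijenhuis M.J (X) (Y)))) +
      (((b * c) * (-1/2 : ℝ)) • (M.I (M.nijenhuis M.J (M.I (X)) (M.I (Y))))) +
      (((c * c) * (1/2 : ℝ)) • (M.nijenhuis M.I (X) (Y))) +
      (((c * c) * (1/2 : ℝ)) • (M.nijenhuis M.I (M.J (X)) (M.J (Y)))) +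
      (((c * c) * (-1/2 : ℝ)) • (M.J (M.nijenhuis M.I (X) (M.J (Y))))) +
      (((c * c) * (-1/2 : ℝ)) • (M.J (M.nijenhuis M.I (M.J (X)) (Y)))) +
      (((c * c) * (1/2 : ℝ)) • (M.nijenhuis M.J (X) (Y))) +
      (((c * c) * (1/2 : ℝ)) • (M.nijenhuis M.J (M.I (X)) (M.I (Y)))) +
      (((c * c) * (-1/2 : ℝ)) • (M.I (M.nijenhuis M.J (X) (M.I (Y))))) +
      (((c * c) * (-1/2 : ℝ)) • (M.I (M.nijenhuis M.J (M.I (X)) (Y)))) := by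
    simp only [AnticommutingComplexPair.nijenhuis, map_add, map_sub, map_neg,
      LinearMap.map_smul_of_tower, M.bracket_add_left, M.bracket_add_right,
      M.bracket_smul_left, hsr, hnl, hnr, neg_neg, M.I_sq, M.J_sq, hJI, smul_neg]
    module
  have hI' : ∀ X Y, M.nijenhuis (⇑M.I) X Y = 0 := hI
  have hJ' : ∀ X Y, M.nijenhuis (⇑M.J) X Y = 0 := hJ
  rw [key]
  simp only [hI', hJ', map_zero, smul_zero, add_zero, zero_add]
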